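/- Let X be a real Banach space and let {U_a}_{a∈Λ} be a family of mutually disjoint open convex subsets of X such that C = X \ ⋃_{a∈Λ} U_a is nonempty. Then for every a ∈ Λ, the distance function d_C is concave on U_a (hence d_C is locally DC on X\C). -/

import Mathlib

open Metric Filter Topology

/-- If `C = X \ ⋃ a, U a` is nonempty, where the `U a` are mutually disjoint open convex
sets, then the distance function `d_C` is concave on each `U a` (hence locally DC on
`X \ C`). -/
theorem infDist_concaveOn_of_swiss_cheese
    (X : Type*) [NormedAddCommGroup X] [NormedSpace ℝ X] [CompleteSpace X]
    (Λ : Type*) (U : Λ → Set X)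
    (hopen : ∀ a, IsOpen (U a)) (hconv : ∀ a, Convex ℝ (U a))
    (hdisj : ∀ a b, a ≠ b → Disjoint (U a) (U b))
    (hCne : (Set.univ \ ⋃ a, U a).Nonempty) :
    ∀ a, ConcaveOn ℝ (U a) (fun x : X => Metric.infDist x (Set.univ \ ⋃ b, U b)) := by
  intro a
  set C : Set X := Set.univ \ ⋃ b, U b with hC
  -- Key claim: the open ball around `x ∈ U a` of radius `infDist x C` is inside `U a`.
  have key : ∀ x ∈ U a, ∀ w : X, dist x w < infDist x C → w ∈ U a := by
    intro x hx w hw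
    have hseg : segment ℝ x w ⊆ U a := by
      refine (convex_segment x w).isPreconnected.subset_of_closure_inter_subset
        (hopen a) ⟨x, left_mem_segment ℝ x w, hx⟩ ?_
      rintro p ⟨hpc, hps⟩
      by_contra hpa
      -- p is in the closure of U a but not in U a, so it is in no U b, hence in C
      have hpC : p ∈ C := by
        refine ⟨Set.mem_univ _, ?_⟩
        intro hmem
        obtain ⟨s, ⟨b, rfl⟩, hpb⟩ := hmem
        rcases eq_or_ne b a with rfl | hba
        · exact hpa hpb
        · obtain ⟨q, hq1, hq2⟩ := mem_closure_iff.1 hpc _ (hopen b) hpb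
          exact (hdisj b a hba).ne_of_mem hq1 hq2 rfl
      -- but every point on the segment is within `dist x w < infDist x C` of x
      have hdistle : dist x p ≤ dist x w := by
        obtain ⟨u, v, hu, hv, huv, rfl⟩ := hps
        have hu' : u = 1 - v := by linarith
        subst hu'
        rw [dist_eq_norm, dist_eq_norm]
        calc ‖x - ((1 - v) • x + v • w)‖ = ‖-(v • (w - x))‖ := by
              congr 1; module
          _ = v * ‖w - x‖ := by rw [norm_neg, norm_smul, Real.norm_of_nonneg hv]
          _ ≤ 1 * ‖w - x‖ := by
              apply mul_le_mul_of_nonneg_right _ (norm_nonneg _)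
              linarith
          _ = ‖x - w‖ := by rw [one_mul, ← norm_neg]; congr 1; abel
      exact absurd (infDist_le_dist_of_mem hpC) (by linarith [hw, hdistle])
    exact hseg (right_mem_segment ℝ x w)
  refine ⟨hconv a, fun x hx y hy p q hp hq hpq => ?_⟩
  simp only [smul_eq_mul]
  refine le_of_not_gt fun hltd => ?_
  obtain ⟨c, hc, hlt⟩ := (infDist_lt_iff hCne).1 hltd
  set dx := infDist x C with hdx
  set dy := infDist y C with hdy
  set z := p • x + q • y with hz
  have hdx0 : 0 ≤ dx := infDist_nonneg
  have hdy0 : 0 ≤ dy := infDist_nonneg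
  set r : ℝ := p * dx + q * dy with hr
  have hr0 : 0 < r := lt_of_le_of_lt dist_nonneg hlt
  -- construct witnesses in U a
  have hw1 : x + (dx / r) • (c - z) ∈ U a := by
    rcases eq_or_lt_of_le hdx0 with h0 | h0
    · simp [← h0]
      exact hx
    · refine key x hx _ ?_
      rw [dist_eq_norm]
      have : x - (x + (dx / r) • (c - z)) = -((dx / r) • (c - z)) := by abel
      rw [this, norm_neg, norm_smul, Real.norm_of_nonneg (by positivity)]
      have hcz : ‖c - z‖ < r := by rw [← dist_eq_norm, dist_comm]; exact hlt
      calc dx / r * ‖c - z‖ < dx / r * r := by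
            apply mul_lt_mul_of_pos_left hcz (by positivity)
        _ = dx := by field_simp
  have hw2 : y + (dy / r) • (c - z) ∈ U a := by
    rcases eq_or_lt_of_le hdy0 with h0 | h0
    · simp [← h0]
      exact hy
    · refine key y hy _ ?_
      rw [dist_eq_norm]
      have : y - (y + (dy / r) • (c - z)) = -((dy / r) • (c - z)) := by abel
      rw [this, norm_neg, norm_smul, Real.norm_of_nonneg (by positivity)]
      have hcz : ‖c - z‖ < r := by rw [← dist_eq_norm, dist_comm]; exact hlt
      calc dy / r * ‖c - z‖ < dy / r * r := by
            apply mul_lt_mul_of_pos_left hcz (by positivity)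
        _ = dy := by field_simp
  have hcU : c ∈ U a := by
    have := hconv a hw1 hw2 hp hq hpq
    have heq : p • (x + (dx / r) • (c - z)) + q • (y + (dy / r) • (c - z)) = c := by
      have h1 : p • (x + (dx / r) • (c - z)) + q • (y + (dy / r) • (c - z))
          = z + ((p * (dx / r) + q * (dy / r)) • (c - z)) := by
        rw [hz]; module
      rw [h1]
      have h2 : p * (dx / r) + q * (dy / r) = 1 := by
        field_simp
        exact hr.symm
      rw [h2, one_smul]; abel
    rwa [heq] at this
  exact hc.2 (Set.mem_iUnion.2 ⟨a, hcU⟩)
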